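/- Let D be a symmetric positive definite 3×3 real matrix with λ·I ≤ D ≤ λ⁻¹·I for some 0 < λ ≤ 1, let b ∈ ℝ¹ˣ³ with |b| ≤ H·√3 for each entry bounded by H ≥ 0, and let a ≥ λ with a ≤ 1+H. Set s = a + b D⁻¹ bᵀ. Then λ ≤ s ≤ 1 + H + 3λ⁻¹H², and the matrix M := D⁻¹ - (D⁻¹bᵀ b D⁻¹)/s satisfies λ₁·I ≤ M ≤ λ₁⁻¹·I where λ₁ = λ²/(1 + H + 3H²λ⁻¹). -/

import Mathlib

open Matrix

lemma psd_smul_aux {n : Type*} [Fintype n] {A : Matrix n n ℝ} (hA : A.PosSemidef) {c : ℝ}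
    (hc : 0 ≤ c) : (c • A).PosSemidef := by
  refine Matrix.PosSemidef.of_dotProduct_mulVec_nonneg ?_ (fun x => ?_)
  · have h := hA.1.eq
    rw [Matrix.conjTranspose_eq_transpose_of_trivial] at h
    simp [Matrix.IsHermitian, Matrix.conjTranspose_smul, h]
  · rw [Matrix.smul_mulVec, dotProduct_smul]
    exact mul_nonneg hc (hA.dotProduct_mulVec_nonneg x)

/-- Bounds on s = a + b D⁻¹ bᵀ and on M = D⁻¹ - D⁻¹bᵀbD⁻¹/s under the uniform
ellipticity assumptions of Proposition 2.2. -/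
theorem uniform_ellipticity_inverse_block
    (lam H a : ℝ) (hlam : 0 < lam) (hlam1 : lam ≤ 1) (hH : 0 ≤ H)
    (ha1 : lam ≤ a) (ha2 : a ≤ 1 + H)
    (b : Matrix (Fin 1) (Fin 3) ℝ) (hb : ∀ i, |b 0 i| ≤ H)
    (D : Matrix (Fin 3) (Fin 3) ℝ) (hDsymm : D.IsSymm) (hD : D.PosDef)
    (hDlo : (D - lam • (1 : Matrix (Fin 3) (Fin 3) ℝ)).PosSemidef)
    (hDhi : (lam⁻¹ • (1 : Matrix (Fin 3) (Fin 3) ℝ) - D).PosSemidef)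
    (s : ℝ) (hs : s = a + (b * D⁻¹ * bᵀ) 0 0)
    (M : Matrix (Fin 3) (Fin 3) ℝ)
    (hM : M = D⁻¹ - s⁻¹ • (D⁻¹ * bᵀ * b * D⁻¹))
    (lam₁ : ℝ) (hlam₁ : lam₁ = lam ^ 2 / (1 + H + 3 * H ^ 2 * lam⁻¹)) :
    lam ≤ s ∧ s ≤ 1 + H + 3 * lam⁻¹ * H ^ 2 ∧
    (M - lam₁ • (1 : Matrix (Fin 3) (Fin 3) ℝ)).PosSemidef ∧
    (lam₁⁻¹ • (1 : Matrix (Fin 3) (Fin 3) ℝ) - M).PosSemidef := by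
  have hlam' : (0:ℝ) < lam⁻¹ := inv_pos.mpr hlam
  have hdet : IsUnit D.det := isUnit_iff_ne_zero.mpr hD.det_pos.ne'
  have hDD : D * D⁻¹ = 1 := mul_nonsing_inv D hdet
  have hDD' : D⁻¹ * D = 1 := nonsing_inv_mul D hdet
  have hP : (D⁻¹).PosDef := hD.inv
  have hPs : (D⁻¹).PosSemidef := hP.posSemidef
  obtain ⟨E, hEdef⟩ : ∃ E' : Matrix (Fin 3) (Fin 3) ℝ, E' = (open scoped MatrixOrder in CFC.sqrt (D⁻¹)) := ⟨_, rfl⟩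
  have hEpsd : E.PosSemidef := by rw [hEdef]; exact (open scoped MatrixOrder in (CFC.sqrt_nonneg (D⁻¹)).posSemidef)
  have hEh : Eᴴ = E := hEpsd.1
  have hEt : Eᵀ = E := by rw [← Matrix.conjTranspose_eq_transpose_of_trivial]; exact hEh
  have hEE : E * E = D⁻¹ := by rw [hEdef]; exact (open scoped MatrixOrder in CFC.sqrt_mul_sqrt_self (D⁻¹) hPs.nonneg)
  have h1 : E * D⁻¹ = D⁻¹ * E := by rw [← hEE, Matrix.mul_assoc]
  have hcomm : D * E = E * D := by
    have h3 : D * (E * D⁻¹) * D = D * (D⁻¹ * E) * D := by rw [h1]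
    have l : D * (E * D⁻¹) * D = D * E := by
      simp only [Matrix.mul_assoc, hDD', Matrix.mul_one]
    have r : D * (D⁻¹ * E) * D = E * D := by
      simp only [← Matrix.mul_assoc, hDD, Matrix.one_mul]
    rw [l, r] at h3; exact h3
  have hEDE : E * D * E = 1 := by
    rw [← hcomm, Matrix.mul_assoc, hEE, hDD]
  -- conjugated bounds
  have h1psd : ((1 : Matrix (Fin 3) (Fin 3) ℝ) - lam • (E * E)).PosSemidef := by
    have h := hDlo.mul_mul_conjTranspose_same E
    rw [hEh] at h
    have he : E * (D - lam • 1) * E = 1 - lam • (E * E) := by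
      simp only [Matrix.mul_sub, Matrix.sub_mul, Matrix.mul_smul, Matrix.smul_mul,
        Matrix.mul_one, hEDE]
    rwa [he] at h
  have h2psd : (lam⁻¹ • (E * E) - (1 : Matrix (Fin 3) (Fin 3) ℝ)).PosSemidef := by
    have h := hDhi.mul_mul_conjTranspose_same E
    rw [hEh] at h
    have he : E * (lam⁻¹ • 1 - D) * E = lam⁻¹ • (E * E) - 1 := by
      simp only [Matrix.mul_sub, Matrix.sub_mul, Matrix.mul_smul, Matrix.smul_mul,
        Matrix.mul_one, hEDE]
    rwa [he] at h
  have hup : (lam⁻¹ • (1 : Matrix (Fin 3) (Fin 3) ℝ) - D⁻¹).PosSemidef := by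
    have h := psd_smul_aux h1psd hlam'.le
    rwa [smul_sub, smul_smul, inv_mul_cancel₀ hlam.ne', one_smul, hEE] at h
  have hlo : (D⁻¹ - lam • (1 : Matrix (Fin 3) (Fin 3) ℝ)).PosSemidef := by
    have h := psd_smul_aux h2psd hlam.le
    rwa [smul_sub, smul_smul, mul_inv_cancel₀ hlam.ne', one_smul, hEE] at h
  -- scalar bounds on s
  set v : Fin 3 → ℝ := fun i => b 0 i with hv
  have hvq : (b * D⁻¹ * bᵀ) 0 0 = v ⬝ᵥ (D⁻¹ *ᵥ v) := by
    simp [Matrix.mul_apply, Matrix.mulVec, dotProduct, Fin.sum_univ_three,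
      Matrix.transpose_apply, hv]
    ring
  have hq0 : 0 ≤ v ⬝ᵥ (D⁻¹ *ᵥ v) := by simpa using hPs.dotProduct_mulVec_nonneg v
  have part1 : lam ≤ s := by rw [hs, hvq]; linarith
  have hq_up : v ⬝ᵥ (D⁻¹ *ᵥ v) ≤ lam⁻¹ * (v ⬝ᵥ v) := by
    have h := hup.dotProduct_mulVec_nonneg v
    simp only [star_trivial, Matrix.sub_mulVec, Matrix.smul_mulVec, Matrix.one_mulVec,
      dotProduct_sub, dotProduct_smul, smul_eq_mul] at h
    linarith
  have hvv : v ⬝ᵥ v ≤ 3 * H ^ 2 := by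
    have hsq : ∀ i, (b 0 i) ^ 2 ≤ H ^ 2 := fun i => by
      have h := abs_le.mp (hb i); nlinarith [h.1, h.2]
    have h0 := hsq 0; have h1 := hsq 1; have h2 := hsq 2
    simp only [dotProduct, Fin.sum_univ_three, hv]
    nlinarith
  have part2 : s ≤ 1 + H + 3 * lam⁻¹ * H ^ 2 := by
    have h := mul_le_mul_of_nonneg_left hvv hlam'.le
    have heq : lam⁻¹ * (3 * H ^ 2) = 3 * lam⁻¹ * H ^ 2 := by ring
    rw [hs, hvq]; linarith
  have hspos : (0:ℝ) < s := lt_of_lt_of_le hlam part1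
  have hs0 : s ≠ 0 := hspos.ne'
  have ha0 : (0:ℝ) ≤ a := hlam.le.trans ha1
  have h3H : (0:ℝ) ≤ 3 * lam⁻¹ * H ^ 2 := by positivity
  have hden : (0:ℝ) < 1 + H + 3 * lam⁻¹ * H ^ 2 := by linarith
  have hden1 : (1:ℝ) ≤ 1 + H + 3 * H ^ 2 * lam⁻¹ := by nlinarith
  have hlam₁pos : 0 < lam₁ := by
    rw [hlam₁]
    apply div_pos (pow_pos hlam 2); linarith
  have hlam₁lam : lam₁ ≤ lam := by
    have h := div_le_self (sq_nonneg lam) hden1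
    rw [hlam₁]
    nlinarith [sq_nonneg lam]
  have hinv : lam⁻¹ ≤ lam₁⁻¹ := inv_anti₀ hlam₁pos hlam₁lam
  have hcoef : lam₁ ≤ (a / s) * lam := by
    have hdd : lam / (1 + H + 3 * lam⁻¹ * H ^ 2) ≤ a / s :=
      div_le_div₀ ha0 ha1 hspos part2
    have h2 : lam / (1 + H + 3 * lam⁻¹ * H ^ 2) * lam ≤ (a / s) * lam :=
      mul_le_mul_of_nonneg_right hdd hlam.le
    have h3 : lam₁ = lam / (1 + H + 3 * lam⁻¹ * H ^ 2) * lam := by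
      rw [hlam₁]; ring
    linarith
  -- matrix pieces
  obtain ⟨w, hw⟩ : ∃ w' : Matrix (Fin 1) (Fin 3) ℝ, w' = b * E := ⟨_, rfl⟩
  have hwT : wᵀ = E * bᵀ := by rw [hw, Matrix.transpose_mul, hEt]
  have hNw : E * bᵀ * b * E = wᵀ * w := by
    rw [hwT, hw]; simp only [Matrix.mul_assoc]
  have hww : w * wᵀ = b * D⁻¹ * bᵀ := by
    rw [hwT, hw]; simp only [← hEE, Matrix.mul_assoc]
  have hK : ((s - a) • (1 : Matrix (Fin 3) (Fin 3) ℝ) - E * bᵀ * b * E).PosSemidef := by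
    have hsa : s - a = (w * wᵀ) 0 0 := by rw [hs, hww]; ring
    rw [hNw, hsa]
    refine Matrix.PosSemidef.of_dotProduct_mulVec_nonneg ?_ (fun x => ?_)
    · simp [Matrix.IsHermitian, Matrix.conjTranspose_sub, Matrix.conjTranspose_smul,
        Matrix.conjTranspose_one, Matrix.conjTranspose_mul,
        Matrix.conjTranspose_eq_transpose_of_trivial, Matrix.transpose_transpose]
    · simp only [star_trivial, Matrix.sub_mulVec, Matrix.smul_mulVec, Matrix.one_mulVec,
        dotProduct_sub, dotProduct_smul, smul_eq_mul]
      simp only [Matrix.mul_apply, Matrix.mulVec, dotProduct, Fin.sum_univ_three,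
        Fin.sum_univ_one, Matrix.transpose_apply]
      clear * - x w
      nlinarith [sq_nonneg (w 0 0 * x 1 - w 0 1 * x 0),
        sq_nonneg (w 0 0 * x 2 - w 0 2 * x 0),
        sq_nonneg (w 0 1 * x 2 - w 0 2 * x 1)]
  have hT1 : ((s - a) • D⁻¹ - D⁻¹ * bᵀ * b * D⁻¹).PosSemidef := by
    have h := hK.mul_mul_conjTranspose_same E
    rw [hEh] at h
    have he : E * ((s - a) • (1 : Matrix (Fin 3) (Fin 3) ℝ) - E * bᵀ * b * E) * E
        = (s - a) • D⁻¹ - D⁻¹ * bᵀ * b * D⁻¹ := by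
      simp only [Matrix.mul_sub, Matrix.sub_mul, Matrix.mul_smul, Matrix.smul_mul,
        Matrix.mul_one, ← hEE, Matrix.mul_assoc]
    rwa [he] at h
  have hBpsd : (D⁻¹ * bᵀ * b * D⁻¹).PosSemidef := by
    have h := Matrix.posSemidef_conjTranspose_mul_self (b * D⁻¹)
    have hPt : (D⁻¹)ᵀ = D⁻¹ := by
      rw [← Matrix.conjTranspose_eq_transpose_of_trivial]; exact hP.1.eq
    simp only [Matrix.conjTranspose_eq_transpose_of_trivial, Matrix.transpose_mul, hPt,
      ← Matrix.mul_assoc] at h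
    exact h
  have part3 : (M - lam₁ • (1 : Matrix (Fin 3) (Fin 3) ℝ)).PosSemidef := by
    have hMlow : M - lam₁ • (1 : Matrix (Fin 3) (Fin 3) ℝ)
        = s⁻¹ • ((s - a) • D⁻¹ - D⁻¹ * bᵀ * b * D⁻¹)
          + (a / s) • (D⁻¹ - lam • (1 : Matrix (Fin 3) (Fin 3) ℝ))
          + ((a / s) * lam - lam₁) • (1 : Matrix (Fin 3) (Fin 3) ℝ) := by
      rw [hM]
      match_scalars <;> field_simp <;> ring
    rw [hMlow]
    exact ((psd_smul_aux hT1 (inv_nonneg.mpr hspos.le)).add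
      (psd_smul_aux hlo (div_nonneg ha0 hspos.le))).add
      (psd_smul_aux Matrix.PosSemidef.one (sub_nonneg.mpr hcoef))
  have part4 : (lam₁⁻¹ • (1 : Matrix (Fin 3) (Fin 3) ℝ) - M).PosSemidef := by
    have hMup : lam₁⁻¹ • (1 : Matrix (Fin 3) (Fin 3) ℝ) - M
        = (lam₁⁻¹ - lam⁻¹) • (1 : Matrix (Fin 3) (Fin 3) ℝ)
          + (lam⁻¹ • (1 : Matrix (Fin 3) (Fin 3) ℝ) - D⁻¹)
          + s⁻¹ • (D⁻¹ * bᵀ * b * D⁻¹) := by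
      rw [hM]; match_scalars <;> ring
    rw [hMup]
    exact ((psd_smul_aux Matrix.PosSemidef.one (sub_nonneg.mpr hinv)).add hup).add
      (psd_smul_aux hBpsd (inv_nonneg.mpr hspos.le))
  exact ⟨part1, part2, part3, part4⟩
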